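/- Refined key recurrence (keeping track of individual coefficients): let p be a prime, P, Q ∈ 𝔽_p[x], 0 ≤ i ≤ p−1, n a natural number, and s a nonzero element of 𝔽_p. Then the number of exponents j with coeff(Q·P^{pn+i}, j) = s equals Σ_{α=0}^{p−1} #{j : coeff(R_α(Q·P^i)·P^n, j) = s}. -/

import Mathlib

open Polynomial

/-- The `α`-th section `R_α(F)` of a polynomial `F` over `ZMod p`:
the coefficient of `x^j` in `R_α(F)` is the coefficient of `x^{p·j+α}` in `F`. -/
noncomputable def sect (p : ℕ) (α : ℕ) (F : (ZMod p)[X]) : (ZMod p)[X] :=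
  ∑ j ∈ Finset.range (F.natDegree + 1), Polynomial.C (F.coeff (p * j + α)) * X ^ j

/-- `a_Q(n) = Σ_j val(coeff(Q·Pⁿ, j))`, i.e. `Q·Pⁿ mod p` evaluated at `x = 1` with
coefficients read as integers in `{0, …, p-1}`. -/
noncomputable def aQ (p : ℕ) (P Q : (ZMod p)[X]) (n : ℕ) : ℕ :=
  ∑ j ∈ (Q * P ^ n).support, ((Q * P ^ n).coeff j).val

lemma sect_coeff (p α : ℕ) (hp : 0 < p) (F : (ZMod p)[X]) (j : ℕ) :
    (sect p α F).coeff j = F.coeff (p * j + α) := by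
  unfold sect
  rw [Polynomial.finset_sum_coeff]
  simp only [Polynomial.coeff_C_mul, Polynomial.coeff_X_pow, mul_ite, mul_one, mul_zero]
  rw [Finset.sum_ite_eq (Finset.range (F.natDegree + 1)) j (fun k => F.coeff (p * k + α))]
  by_cases h : j ∈ Finset.range (F.natDegree + 1)
  · rw [if_pos h]
  · rw [if_neg h]
    have hj : F.natDegree < j := by
      simp only [Finset.mem_range] at h; omega
    rw [Polynomial.coeff_eq_zero_of_natDegree_lt (by nlinarith)]

lemma coeff_mul_expand (p : ℕ) (hp : 0 < p) (F G : (ZMod p)[X]) (α q : ℕ) (hα : α < p) :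
    (F * expand (ZMod p) p G).coeff (p * q + α) = (sect p α F * G).coeff q := by
  rw [mul_comm F, mul_comm (sect p α F)]
  rw [Polynomial.coeff_mul, Polynomial.coeff_mul]
  rw [Finset.Nat.sum_antidiagonal_eq_sum_range_succ_mk,
    Finset.Nat.sum_antidiagonal_eq_sum_range_succ_mk]
  have hL : ∀ k ∈ Finset.range (p * q + α + 1),
      (expand (ZMod p) p G).coeff k * F.coeff (p * q + α - k)
        = if p ∣ k then G.coeff (k / p) * F.coeff (p * q + α - k) else 0 := by
    intro k _
    rw [Polynomial.coeff_expand hp G k]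
    split_ifs <;> simp
  rw [Finset.sum_congr rfl hL, ← Finset.sum_filter]
  refine (Finset.sum_bij' (fun b _ => p * b) (fun k _ => k / p) ?_ ?_ ?_ ?_ ?_).symm
  · intro b hb
    simp only [Finset.mem_range] at hb
    simp only [Finset.mem_filter, Finset.mem_range]
    exact ⟨by nlinarith, dvd_mul_right p b⟩
  · intro k hk
    simp only [Finset.mem_filter, Finset.mem_range] at hk
    obtain ⟨hk1, c, rfl⟩ := hk
    have : c ≤ q := by nlinarith
    simp only [Finset.mem_range]
    rw [Nat.mul_div_cancel_left _ hp]
    omega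
  · intro b _
    exact Nat.mul_div_cancel_left _ hp
  · intro k hk
    simp only [Finset.mem_filter] at hk
    exact Nat.mul_div_cancel' hk.2
  · intro b hb
    simp only [Finset.mem_range] at hb
    have hbq : b ≤ q := by omega
    rw [Nat.mul_div_cancel_left _ hp, sect_coeff p α hp]
    beta_reduce
    have h1 : p * b ≤ p * q := Nat.mul_le_mul_left p hbq
    congr 2
    rw [Nat.mul_sub]
    omega

theorem refined_key_recurrence_step (p : ℕ) (hp : p.Prime) (P Q : (ZMod p)[X])
    (i : ℕ) (hi : i < p) (n : ℕ) (s : ZMod p) (hs : s ≠ 0) :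
    {j : ℕ | (Q * P ^ (p * n + i)).coeff j = s}.ncard =
      ∑ α ∈ Finset.range p, {j : ℕ | (sect p α (Q * P ^ i) * P ^ n).coeff j = s}.ncard := by
  classical
  haveI : Fact p.Prime := ⟨hp⟩
  have hp0 : 0 < p := hp.pos
  set F := Q * P ^ i with hF
  set G := P ^ n with hG
  -- Frobenius: the big polynomial is F * expand (ZMod p) p G
  have hbig : Q * P ^ (p * n + i) = F * expand (ZMod p) p G := by
    have h1 : (expand (ZMod p) p P : (ZMod p)[X]) = P ^ p := by
      have h := Polynomial.map_frobenius_expand p P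
      rwa [ZMod.frobenius_zmod, Polynomial.map_id] at h
    have h2 : (expand (ZMod p) p) (P ^ n) = (P ^ p) ^ n := by rw [map_pow, h1]
    rw [hG, h2, hF, ← pow_mul]
    rw [pow_add]
    ring
  have hcoeff : ∀ α < p, ∀ q,
      (Q * P ^ (p * n + i)).coeff (p * q + α) = (sect p α F * G).coeff q := by
    intro α hα q
    rw [hbig]
    exact coeff_mul_expand p hp0 F G α q hα
  -- identify the sets with finsets
  have hset : ∀ H : (ZMod p)[X],
      {j : ℕ | H.coeff j = s} = ↑(H.support.filter fun j => H.coeff j = s) := by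
    intro H
    ext j
    simp only [Set.mem_setOf_eq, Finset.coe_filter, Polynomial.mem_support_iff]
    constructor
    · intro h; exact ⟨h ▸ hs, h⟩
    · exact fun h => h.2
  simp only [hset, Set.ncard_coe_finset]
  set B := Q * P ^ (p * n + i) with hB
  set Sb : Finset ℕ := B.support.filter fun j => B.coeff j = s with hSb
  set T : ℕ → Finset ℕ := fun α => (sect p α F * G).support.filter
    fun q => (sect p α F * G).coeff q = s with hT
  have himage : Sb = (Finset.range p).biUnion fun α => (T α).image fun q => p * q + α := by
    ext j
    simp only [hSb, hT, Finset.mem_biUnion, Finset.mem_image, Finset.mem_filter,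
      Finset.mem_range, Polynomial.mem_support_iff]
    constructor
    · rintro ⟨-, h⟩
      have hjp : p * (j / p) + j % p = j := Nat.div_add_mod j p
      have hc : (sect p (j % p) F * G).coeff (j / p) = s := by
        have h3 := hcoeff (j % p) (Nat.mod_lt _ hp0) (j / p)
        rw [hjp] at h3
        rw [← h3, h]
      exact ⟨j % p, Nat.mod_lt _ hp0, j / p, ⟨by rw [hc]; exact hs, hc⟩, hjp⟩
    · rintro ⟨α, hα, q, ⟨-, hq⟩, rfl⟩
      have := hcoeff α hα q
      rw [this, hq]
      exact ⟨hs, rfl⟩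
  rw [himage, Finset.card_biUnion]
  · apply Finset.sum_congr rfl
    intro α _
    apply Finset.card_image_of_injective
    intro a b hab
    simp only at hab
    exact Nat.eq_of_mul_eq_mul_left hp0 (by omega)
  · intro α hα β hβ hne
    simp only [Finset.mem_coe, Finset.mem_range] at hα hβ
    rw [Function.onFun, Finset.disjoint_left]
    rintro j hj hj'
    simp only [Finset.mem_image] at hj hj'
    obtain ⟨a, -, rfl⟩ := hj
    obtain ⟨b, -, hb⟩ := hj'
    apply hne
    have h1 : (p * a + α) % p = α := by rw [Nat.mul_add_mod, Nat.mod_eq_of_lt hα]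
    have h2 : (p * b + β) % p = β := by rw [Nat.mul_add_mod, Nat.mod_eq_of_lt hβ]
    rw [← h1, ← hb]
    exact h2
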